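/- Let d ≥ 3 be an integer and let ℓ ≥ 5 be prime. For each prime q set μ_q = ord_q(d²−1) and ν_q = ord_q(d), and define the finite set T_q ⊂ ℤ² as follows: if q ∤ d(d²−1) then T_q = {(0,0)}; if q = 2 and 2 ∣ d then T_2 = {(0, 1−ν₂)}; if q = 2, 2 ∤ d and μ₂ is even then T_2 = {(1,0), (μ₂/2, 1−μ₂/2), (3−μ₂, μ₂−2)}; if q = 2, 2 ∤ d and μ₂ is odd then T_2 = {(1,0), (3−μ₂, μ₂−2)}; if q is odd and q ∣ d then T_q = {(−ν_q, 0), (0, −ν_q)}; if q is odd and q ∣ (d²−1) then T_q = {(0,0), (−μ_q, μ_q), (μ_q/2, −μ_q/2)} when μ_q is even and T_q = {(0,0), (−μ_q, μ_q)} when μ_q is odd. Suppose x, y are integers with d(2x+d+1)(x² + (d+1)x + d(d+1)/2) = 2yˡ. Then there exist positive rational numbers α, β satisfying (ord_q(α), ord_q(β)) ∈ T_q for every prime q, and rational numbers y₁, y₂, such that 2x+d+1 = α y₁ˡ and x² + (d+1)x + d(d+1)/2 = β y₂ˡ. -/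

import Mathlib

section helpers

lemma pvr_int_nonneg (p : ℕ) (z : ℤ) : 0 ≤ padicValRat p (z : ℚ) := by
  rw [padicValRat.of_int]; exact Int.natCast_nonneg _

lemma pvr_eq_zero_of_not_dvd {p : ℕ} {z : ℤ} (h : ¬ (p:ℤ) ∣ z) :
    padicValRat p (z : ℚ) = 0 := by
  rw [padicValRat.of_int, padicValInt.eq_zero_of_not_dvd h]; rfl

lemma pvr_le_of_pow_dvd {p : ℕ} [hp : Fact p.Prime] {z : ℤ} {k : ℕ} (hz : z ≠ 0)
    (h : (p:ℤ) ^ k ∣ z) : (k : ℤ) ≤ padicValRat p (z : ℚ) := by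
  rw [padicValRat.of_int]
  rcases (padicValInt_dvd_iff (p := p) k z).1 h with h' | h'
  · exact absurd h' hz
  · exact_mod_cast h'

lemma pvr_one_le_of_dvd {p : ℕ} [hp : Fact p.Prime] {z : ℤ} (hz : z ≠ 0)
    (h : (p:ℤ) ∣ z) : 1 ≤ padicValRat p (z : ℚ) := by
  have := pvr_le_of_pow_dvd (p := p) (k := 1) hz (by simpa using h)
  simpa using this

lemma pvr_dvd_iff {p : ℕ} [hp : Fact p.Prime] {z : ℤ} (hz : z ≠ 0) :
    (p:ℤ) ∣ z ↔ 1 ≤ padicValRat p (z : ℚ) := by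
  constructor
  · exact pvr_one_le_of_dvd hz
  · intro h1
    by_contra hnd
    rw [pvr_eq_zero_of_not_dvd hnd] at h1
    norm_num at h1

lemma pvr_zpow {p : ℕ} [Fact p.Prime] {q : ℚ} (hq : q ≠ 0) (k : ℤ) :
    padicValRat p (q ^ k) = k * padicValRat p q := by
  obtain ⟨n, rfl | rfl⟩ := k.eq_nat_or_neg
  · rw [zpow_natCast, padicValRat.pow q]
  · rw [zpow_neg, zpow_natCast, padicValRat.inv, padicValRat.pow q]; push_cast; ring

lemma pvr_prime_zpow {p q : ℕ} [hq : Fact q.Prime] (hp : p.Prime) (k : ℤ) :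
    padicValRat q ((p:ℚ) ^ k) = if p = q then k else 0 := by
  have hp0 : (p:ℚ) ≠ 0 := by exact_mod_cast hp.ne_zero
  rw [pvr_zpow hp0 k]
  split
  · next h =>
    subst h
    rw [padicValRat.self hq.out.one_lt]; ring
  · next h =>
    have : ¬ (q:ℤ) ∣ (p:ℤ) := by
      rw [Int.natCast_dvd_natCast]
      intro hd
      exact h ((Nat.prime_dvd_prime_iff_eq hq.out hp).1 hd).symm
    have h0 : padicValRat q ((p : ℤ) : ℚ) = 0 := pvr_eq_zero_of_not_dvd this
    push_cast at h0
    rw [h0]; ring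

lemma pvr_prod {q : ℕ} [Fact q.Prime] (S : Finset ℕ) (f : ℕ → ℚ)
    (hf : ∀ p ∈ S, f p ≠ 0) :
    padicValRat q (∏ p ∈ S, f p) = ∑ p ∈ S, padicValRat q (f p) := by
  induction S using Finset.cons_induction with
  | empty => simpa using padicValRat.one
  | cons a S ha ih =>
    rw [Finset.prod_cons, Finset.sum_cons,
      padicValRat.mul (hf a (Finset.mem_cons_self a S))
        (Finset.prod_ne_zero_iff.2 fun p hp => hf p (Finset.mem_cons_of_mem hp)),
      ih fun p hp => hf p (Finset.mem_cons_of_mem hp)]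

end helpers

lemma construct0 (t : ℕ → ℤ) (N : ℤ) (hN : N ≠ 0)
    (hfin : ∀ q : ℕ, q.Prime → ¬ (q:ℤ) ∣ N → t q = 0) :
    ∃ α : ℚ, 0 < α ∧ ∀ q : ℕ, q.Prime → padicValRat q α = t q := by
  refine ⟨∏ p ∈ N.natAbs.primeFactors, (p:ℚ) ^ (t p), ?_, ?_⟩
  · apply Finset.prod_pos
    intro p hp
    have : (0:ℚ) < p := by
      exact_mod_cast (Nat.prime_of_mem_primeFactors hp).pos
    exact zpow_pos this _
  · intro q hq
    haveI : Fact q.Prime := ⟨hq⟩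
    rw [pvr_prod _ _ (fun p hp => zpow_ne_zero _ (by
      exact_mod_cast (Nat.prime_of_mem_primeFactors hp).ne_zero))]
    have : ∀ p ∈ N.natAbs.primeFactors, padicValRat q ((p:ℚ) ^ (t p)) =
        if p = q then t p else 0 := fun p hp =>
      pvr_prime_zpow (Nat.prime_of_mem_primeFactors hp) _
    rw [Finset.sum_congr rfl this, Finset.sum_ite_eq' _ q t]
    split
    · rfl
    · next h =>
      refine (hfin q hq fun hd => h ?_).symm
      rw [Nat.mem_primeFactors]
      exact ⟨hq, (by simpa using Int.natAbs_dvd_natAbs.2 hd), Int.natAbs_ne_zero.2 hN⟩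

lemma rat_eq_one (r : ℚ) (hr : 0 < r) (h : ∀ q : ℕ, q.Prime → padicValRat q r = 0) :
    r = 1 := by
  have hnum : r.num ≠ 0 := Rat.num_ne_zero.2 hr.ne'
  have hden : (r.den : ℤ) ≠ 0 := by exact_mod_cast r.den_nz
  have key : ∀ q : ℕ, q.Prime → ¬ q ∣ r.num.natAbs ∧ ¬ q ∣ r.den := by
    intro q hq
    haveI : Fact q.Prime := ⟨hq⟩
    have hval : (padicValInt q r.num : ℤ) - padicValNat q r.den = 0 := by
      rw [← padicValRat_def q r]; exact h q hq
    by_cases hd : q ∣ r.den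
    · exfalso
      have h1 : 1 ≤ padicValNat q r.den :=
        one_le_padicValNat_of_dvd r.den_nz hd
      have h2 : 1 ≤ padicValInt q r.num := by omega
      have hdn : q ∣ r.num.natAbs := by
        apply dvd_of_one_le_padicValNat
        simpa [padicValInt] using h2
      exact hq.ne_one (Nat.Coprime.eq_one_of_dvd (r.reduced.coprime_dvd_left hdn) hd)
    · have : padicValNat q r.den = 0 := padicValNat.eq_zero_of_not_dvd hd
      rw [this] at hval
      have : padicValInt q r.num = 0 := by omega
      refine ⟨fun hdn => ?_, hd⟩
      have := one_le_padicValNat_of_dvd (Int.natAbs_ne_zero.2 hnum) hdn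
      simp only [padicValInt] at *
      omega
  have h1 : r.num.natAbs = 1 := by
    by_contra hne
    obtain ⟨q, hq, hdvd⟩ := Nat.exists_prime_and_dvd hne
    exact (key q hq).1 hdvd
  have h2 : r.den = 1 := by
    by_contra hne
    obtain ⟨q, hq, hdvd⟩ := Nat.exists_prime_and_dvd hne
    exact (key q hq).2 hdvd
  have : r.num = 1 := by
    rcases Int.natAbs_eq r.num with he | he <;> rw [h1] at he <;> [exact he; skip]
    exfalso
    have := Rat.num_pos.2 hr
    omega
  rw [← Rat.num_div_den r, this, h2]
  norm_num

lemma rat_eq_of_val {r s : ℚ} (hr : 0 < r) (hs : 0 < s)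
    (h : ∀ q : ℕ, q.Prime → padicValRat q r = padicValRat q s) : r = s := by
  have := rat_eq_one (r / s) (div_pos hr hs) (fun q hq => by
    haveI : Fact q.Prime := ⟨hq⟩
    rw [padicValRat.div hr.ne' hs.ne', h q hq, sub_self])
  field_simp at this
  linarith [this]

lemma construct {ℓ : ℕ} (hlodd : Odd ℓ) (hl0 : ℓ ≠ 0) (A N : ℤ) (hA : A ≠ 0) (hN : N ≠ 0)
    (t : ℕ → ℤ)
    (hfin : ∀ q : ℕ, q.Prime → ¬ (q:ℤ) ∣ N → t q = 0 ∧ padicValRat q (A:ℚ) = 0)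
    (hdvd : ∀ q : ℕ, q.Prime → (ℓ:ℤ) ∣ padicValRat q (A:ℚ) - t q) :
    ∃ α : ℚ, 0 < α ∧ (∀ q : ℕ, q.Prime → padicValRat q α = t q) ∧
      ∃ y₁ : ℚ, (A:ℚ) = α * y₁ ^ ℓ := by
  obtain ⟨α, hα, hval⟩ := construct0 t N hN (fun q hq h => (hfin q hq h).1)
  obtain ⟨z, hz, hzval⟩ := construct0 (fun q => (padicValRat q (A:ℚ) - t q) / ℓ) N hN
    (fun q hq h => by beta_reduce; rw [(hfin q hq h).2, (hfin q hq h).1]; simp)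
  refine ⟨α, hα, hval, (if A < 0 then -1 else 1) * z, ?_⟩
  have hAabs : ((|A| : ℤ) : ℚ) = α * z ^ ℓ := by
    apply rat_eq_of_val (by exact_mod_cast abs_pos.2 hA) (by positivity)
    intro q hq
    haveI : Fact q.Prime := ⟨hq⟩
    have h1 : padicValRat q ((|A| : ℤ) : ℚ) = padicValRat q (A : ℚ) := by
      rcases abs_choice A with h | h <;> rw [h]
      push_cast
      exact padicValRat.neg _
    rw [h1, padicValRat.mul hα.ne' (pow_ne_zero _ hz.ne'), padicValRat.pow z,
      hval q hq, hzval q hq, Int.mul_ediv_cancel' (hdvd q hq)]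
    ring
  by_cases hneg : A < 0
  · rw [if_pos hneg]
    have : ((|A| : ℤ) : ℚ) = -(A : ℚ) := by
      rw [abs_of_neg hneg]; push_cast; ring
    rw [this] at hAabs
    rw [mul_pow, hlodd.neg_one_pow]
    linarith
  · rw [if_neg hneg, one_mul]
    rw [abs_of_nonneg (by omega)] at hAabs
    exact hAabs




/-- The set `T_q` of pairs of valuations occurring in the descent for exponents `ℓ ≥ 5`,
associated to an integer `d` and a prime `q`.  Here `μ = ord_q(d²−1)` and `ν = ord_q(d)`. -/
def descentSet (d : ℤ) (q : ℕ) : Set (ℤ × ℤ) :=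
  let μ : ℤ := (padicValInt q (d ^ 2 - 1) : ℤ)
  let ν : ℤ := (padicValInt q d : ℤ)
  if ¬ ((q : ℤ) ∣ d * (d ^ 2 - 1)) then {(0, 0)}
  else if q = 2 then
    if (2 : ℤ) ∣ d then {(0, 1 - ν)}
    else if 2 ∣ μ then {(1, 0), (μ / 2, 1 - μ / 2), (3 - μ, μ - 2)}
    else {(1, 0), (3 - μ, μ - 2)}
  else if (q : ℤ) ∣ d then {(-ν, 0), (0, -ν)}
  else if 2 ∣ μ then {(0, 0), (-μ, μ), (μ / 2, -μ / 2)}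
  else {(0, 0), (-μ, μ)}

section mem

variable {d : ℤ} {q : ℕ}

lemma mem_ds_notdvd (h : ¬((q:ℤ) ∣ d*(d^2-1))) : ((0:ℤ),(0:ℤ)) ∈ descentSet d q := by
  unfold descentSet
  split_ifs <;> try simp_all
  all_goals by_cases hpar : 2 ∣ (padicValInt q (d^2-1) : ℤ) <;> simp [hpar]

lemma mem_ds_two_even (h2 : (2:ℤ) ∣ d) :
    ((0:ℤ), 1 - (padicValInt 2 d : ℤ)) ∈ descentSet d 2 := by
  have hdvd : (((2:ℕ)):ℤ) ∣ d * (d^2-1) := by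
    push_cast
    exact h2.mul_right _
  unfold descentSet
  split_ifs <;> try simp_all
  all_goals by_cases hpar : 2 ∣ (padicValInt 2 (d^2-1) : ℤ) <;> simp [hpar]

lemma mem_ds_two_odd₁ (h2 : ¬ (2:ℤ) ∣ d) (hD : (2:ℤ) ∣ (d^2-1)) :
    ((1:ℤ), (0:ℤ)) ∈ descentSet d 2 := by
  have hdvd : (((2:ℕ)):ℤ) ∣ d * (d^2-1) := by
    push_cast
    exact hD.mul_left _
  unfold descentSet
  split_ifs <;> try simp_all
  all_goals by_cases hpar : 2 ∣ (padicValInt 2 (d^2-1) : ℤ) <;> simp [hpar]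

lemma mem_ds_two_odd₂ (h2 : ¬ (2:ℤ) ∣ d) (hD : (2:ℤ) ∣ (d^2-1)) :
    ((3 - (padicValInt 2 (d^2-1) : ℤ) : ℤ), ((padicValInt 2 (d^2-1) : ℤ) - 2 : ℤ)) ∈
      descentSet d 2 := by
  have hdvd : (((2:ℕ)):ℤ) ∣ d * (d^2-1) := by
    push_cast
    exact hD.mul_left _
  unfold descentSet
  split_ifs <;> try simp_all
  all_goals by_cases hpar : 2 ∣ (padicValInt 2 (d^2-1) : ℤ) <;> simp [hpar]

lemma mem_ds_two_odd₃ (h2 : ¬ (2:ℤ) ∣ d) (hD : (2:ℤ) ∣ (d^2-1))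
    (hpar : 2 ∣ (padicValInt 2 (d^2-1) : ℤ)) :
    (((padicValInt 2 (d^2-1) : ℤ) / 2 : ℤ), (1 - (padicValInt 2 (d^2-1) : ℤ) / 2 : ℤ)) ∈
      descentSet d 2 := by
  have hdvd : (((2:ℕ)):ℤ) ∣ d * (d^2-1) := by
    push_cast
    exact hD.mul_left _
  unfold descentSet
  split_ifs <;> try simp_all
  all_goals by_cases hpar : 2 ∣ (padicValInt 2 (d^2-1) : ℤ) <;> simp [hpar]

lemma mem_ds_odd_dvd₁ (hq2 : q ≠ 2) (hqd : (q:ℤ) ∣ d) (hd0 : d ≠ 0) :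
    ((-(padicValInt q d : ℤ) : ℤ), (0:ℤ)) ∈ descentSet d q := by
  have hdvd : ((q:ℕ):ℤ) ∣ d * (d^2-1) := hqd.mul_right _
  unfold descentSet
  split_ifs <;> try simp_all
  all_goals by_cases hpar : 2 ∣ (padicValInt q (d^2-1) : ℤ) <;> simp [hpar]

lemma mem_ds_odd_dvd₂ (hq2 : q ≠ 2) (hqd : (q:ℤ) ∣ d) (hd0 : d ≠ 0) :
    ((0:ℤ), (-(padicValInt q d : ℤ) : ℤ)) ∈ descentSet d q := by
  have hdvd : ((q:ℕ):ℤ) ∣ d * (d^2-1) := hqd.mul_right _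
  unfold descentSet
  split_ifs <;> try simp_all
  all_goals by_cases hpar : 2 ∣ (padicValInt q (d^2-1) : ℤ) <;> simp [hpar]

lemma mem_ds_odd_D₁ (hq2 : q ≠ 2) (hqd : ¬ (q:ℤ) ∣ d) (hqD : (q:ℤ) ∣ (d^2-1)) :
    ((0:ℤ), (0:ℤ)) ∈ descentSet d q := by
  have hdvd : ((q:ℕ):ℤ) ∣ d * (d^2-1) := hqD.mul_left _
  unfold descentSet
  split_ifs <;> try simp_all
  all_goals by_cases hpar : 2 ∣ (padicValInt q (d^2-1) : ℤ) <;> simp [hpar]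

lemma mem_ds_odd_D₂ (hq2 : q ≠ 2) (hqd : ¬ (q:ℤ) ∣ d) (hqD : (q:ℤ) ∣ (d^2-1)) :
    ((-(padicValInt q (d^2-1) : ℤ) : ℤ), ((padicValInt q (d^2-1) : ℤ) : ℤ)) ∈ descentSet d q := by
  have hdvd : ((q:ℕ):ℤ) ∣ d * (d^2-1) := hqD.mul_left _
  unfold descentSet
  split_ifs <;> try simp_all
  all_goals by_cases hpar : 2 ∣ (padicValInt q (d^2-1) : ℤ) <;> simp [hpar]

lemma mem_ds_odd_D₃ (hq2 : q ≠ 2) (hqd : ¬ (q:ℤ) ∣ d) (hqD : (q:ℤ) ∣ (d^2-1))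
    (hpar : 2 ∣ (padicValInt q (d^2-1) : ℤ)) :
    (((padicValInt q (d^2-1) : ℤ) / 2 : ℤ), (-(padicValInt q (d^2-1) : ℤ) / 2 : ℤ)) ∈
      descentSet d q := by
  have hdvd : ((q:ℕ):ℤ) ∣ d * (d^2-1) := hqD.mul_left _
  unfold descentSet
  split_ifs <;> try simp_all
  all_goals by_cases hpar : 2 ∣ (padicValInt q (d^2-1) : ℤ) <;> simp [hpar]

lemma ds_forced (h : ¬((q:ℤ) ∣ d*(d^2-1))) {t : ℤ × ℤ} (ht : t ∈ descentSet d q) :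
    t = (0, 0) := by
  unfold descentSet at ht
  rw [if_pos h] at ht
  simpa using ht

end mem

lemma descent_key (d : ℤ) (hd : 3 ≤ d) {ℓ : ℕ} (hℓ : ℓ.Prime) (h5 : 5 ≤ ℓ)
    (A B y : ℤ) (hA : A ≠ 0) (hB : B ≠ 0) (hy : y ≠ 0)
    (h4 : 4 * B = A ^ 2 + (d ^ 2 - 1))
    (heq : d * A * B = 2 * y ^ ℓ)
    (q : ℕ) (hq : q.Prime) :
    ∃ t : ℤ × ℤ, t ∈ descentSet d q ∧
      (ℓ:ℤ) ∣ padicValRat q (A:ℚ) - t.1 ∧ (ℓ:ℤ) ∣ padicValRat q (B:ℚ) - t.2 := by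
  haveI : Fact q.Prime := ⟨hq⟩
  have hd0 : d ≠ 0 := by omega
  have hD0 : d ^ 2 - 1 ≠ 0 := by nlinarith
  have hdq : (d:ℚ) ≠ 0 := Int.cast_ne_zero.2 hd0
  have hAq : (A:ℚ) ≠ 0 := Int.cast_ne_zero.2 hA
  have hBq : (B:ℚ) ≠ 0 := Int.cast_ne_zero.2 hB
  have hyq : (y:ℚ) ≠ 0 := Int.cast_ne_zero.2 hy
  have hDq : ((d^2 - 1 : ℤ):ℚ) ≠ 0 := Int.cast_ne_zero.2 hD0
  set a := padicValRat q (A:ℚ) with ha_def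
  set b := padicValRat q (B:ℚ) with hb_def
  set w := padicValRat q (y:ℚ) with hw_def
  set m := padicValRat q ((d^2-1 : ℤ):ℚ) with hm_def
  have hn_int : padicValRat q ((d : ℤ):ℚ) = (padicValInt q d : ℤ) := padicValRat.of_int
  have hμ : (padicValInt q (d^2-1) : ℤ) = m := padicValRat.of_int.symm
  set n := (padicValInt q d : ℤ) with hn_def
  have ha0 : 0 ≤ a := pvr_int_nonneg q A
  have hb0 : 0 ≤ b := pvr_int_nonneg q B
  have hm0 : 0 ≤ m := pvr_int_nonneg q _
  have hn0 : 0 ≤ n := Int.natCast_nonneg _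
  have c2eq : padicValRat q (2:ℚ) = if q = 2 then 1 else 0 := by
    split
    · next h => subst h; exact padicValRat.self one_lt_two
    · next h =>
      have hnd : ¬ (q:ℤ) ∣ (2:ℤ) := by
        intro hdvd
        have : q ∣ 2 := by exact_mod_cast hdvd
        exact h ((Nat.prime_dvd_prime_iff_eq hq Nat.prime_two).1 this)
      have := pvr_eq_zero_of_not_dvd hnd
      simpa using this
  have R1 : n + a + b = (if q = 2 then 1 else 0) + ℓ * w := by
    have hc : (d:ℚ) * A * B = 2 * (y:ℚ) ^ ℓ := by exact_mod_cast heq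
    have h2 := congrArg (padicValRat q) hc
    rw [padicValRat.mul (mul_ne_zero hdq hAq) hBq, padicValRat.mul hdq hAq,
      padicValRat.mul two_ne_zero (pow_ne_zero _ hyq), padicValRat.pow (y:ℚ), c2eq] at h2
    rw [← hn_int]
    push_cast at h2 ⊢
    linarith
  have hsumeq : (A:ℚ)^2 + ((d^2-1 : ℤ):ℚ) = 4 * (B:ℚ) := by
    have h4' : ((4 * B : ℤ):ℚ) = ((A^2 + (d^2-1) : ℤ):ℚ) := by rw [h4]
    push_cast at h4' ⊢
    linarith
  have hsum : (A:ℚ)^2 + ((d^2-1 : ℤ):ℚ) ≠ 0 := by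
    rw [hsumeq]; exact mul_ne_zero four_ne_zero hBq
  have vA2 : padicValRat q ((A:ℚ)^2) = 2 * a := by
    rw [padicValRat.pow (A:ℚ)]; push_cast; ring
  have R2 : padicValRat q ((A:ℚ)^2 + ((d^2-1 : ℤ):ℚ)) = 2 * (if q = 2 then 1 else 0) + b := by
    rw [hsumeq, padicValRat.mul (by norm_num) hBq,
      show (4:ℚ) = 2^2 by norm_num, padicValRat.pow (2:ℚ), c2eq]
    push_cast; ring
  have hminab : ¬((q:ℤ) ∣ d^2 - 1) → q ≠ 2 → a = 0 ∨ b = 0 := by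
    intro hnD hq2
    by_contra hcon
    push_neg at hcon
    have ha1 : 1 ≤ a := by omega
    have hb1 : 1 ≤ b := by omega
    have hmz : m = 0 := pvr_eq_zero_of_not_dvd hnD
    have hDrw : ((d^2-1 : ℤ):ℚ) = 4 * (B:ℚ) + (-((A:ℚ)^2)) := by linarith [hsumeq]
    have hv4B : padicValRat q ((4:ℚ) * B) = b := by
      rw [padicValRat.mul (by norm_num) hBq, show (4:ℚ) = 2^2 by norm_num,
        padicValRat.pow (2:ℚ), c2eq, if_neg hq2]
      push_cast; ring
    have hvnA2 : padicValRat q (-((A:ℚ)^2)) = 2 * a := by rw [padicValRat.neg, vA2]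
    have hmin := padicValRat.min_le_padicValRat_add (p := q)
      (q := (4:ℚ) * B) (r := -((A:ℚ)^2)) (by rw [← hDrw]; exact hDq)
    rw [hv4B, hvnA2, ← hDrw, ← hm_def] at hmin
    omega
  by_cases hcase1 : (q:ℤ) ∣ d * (d^2 - 1)
  · by_cases hq2 : q = 2
    · subst hq2
      rw [if_pos rfl] at R1 R2
      by_cases h2d : (2:ℤ) ∣ d
      · -- q = 2, 2 ∣ d : A is odd, a = 0
        have hnD : ¬ (2:ℤ) ∣ (d^2 - 1) := by
          intro hdvd
          have h1 : (2:ℤ) ∣ d^2 := by rw [sq]; exact h2d.mul_right d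
          have h2 : (2:ℤ) ∣ d^2 - (d^2 - 1) := dvd_sub h1 hdvd
          norm_num at h2
        have hnA : ¬ (2:ℤ) ∣ A := by
          intro hdvd
          have h1 : (2:ℤ) ∣ A^2 := by rw [sq]; exact hdvd.mul_right A
          apply hnD
          have e : d^2 - 1 = 4*B - A^2 := by linarith
          rw [e]
          exact dvd_sub ⟨2*B, by ring⟩ h1
        have haz : a = 0 := pvr_eq_zero_of_not_dvd hnA
        refine ⟨(0, 1 - n), mem_ds_two_even h2d, by simp [haz], ?_⟩
        exact show (ℓ:ℤ) ∣ b - (1 - n) from ⟨w, by push_cast; linarith⟩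
      · -- q = 2, d odd
        have h8 : (2:ℤ)^3 ∣ d^2 - 1 := by
          obtain ⟨k, hk⟩ : ∃ k, d = 2 * k + 1 := ⟨d / 2, by omega⟩
          obtain ⟨j, hj⟩ := Int.even_mul_succ_self k
          exact ⟨j, by rw [hk]; linear_combination 4 * hj⟩
        have h2D : (2:ℤ) ∣ d^2 - 1 := dvd_trans ⟨4, by norm_num⟩ h8
        have hm3 : 3 ≤ m := by rw [hm_def]; exact pvr_le_of_pow_dvd hD0 h8
        have h2A : (2:ℤ) ∣ A := by
          have h1 : (2:ℤ) ∣ A^2 := by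
            have e : A^2 = 4*B - (d^2-1) := by linarith
            rw [e]
            exact dvd_sub ⟨2*B, by ring⟩ h2D
          exact Int.prime_two.dvd_of_dvd_pow h1
        have ha1 : 1 ≤ a := pvr_one_le_of_dvd hA h2A
        have hnz : n = 0 := by rw [hn_def, padicValInt.eq_zero_of_not_dvd h2d]; rfl
        rcases lt_trichotomy (2 * a) m with hlt | heqc | hgt
        · have hvs : padicValRat 2 ((A:ℚ)^2 + ((d^2-1 : ℤ):ℚ)) = 2 * a := by
            rw [padicValRat.add_eq_of_lt hsum (pow_ne_zero _ hAq) hDq (by rw [vA2]; exact hlt), vA2]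
          rw [hvs] at R2
          have hdvd3 : (ℓ:ℤ) ∣ 3 * (a - 1) := ⟨w, by linarith⟩
          have hla : (ℓ:ℤ) ∣ (a - 1) := by
            rcases (Int.Prime.dvd_mul' hℓ hdvd3) with h | h
            · exfalso
              have h1 := Int.le_of_dvd (by norm_num) h
              have h2 : (5:ℤ) ≤ ℓ := by exact_mod_cast h5
              omega
            · exact h
          refine ⟨(1, 0), mem_ds_two_odd₁ h2d h2D, by simpa using hla, ?_⟩
          refine show (ℓ:ℤ) ∣ b - 0 from ?_
          have e : b - 0 = 2 * (a - 1) := by linarith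
          rw [e]
          exact Dvd.dvd.mul_left hla 2
        · have hpar : (2:ℤ) ∣ (padicValInt 2 (d^2-1) : ℤ) := by rw [hμ, ← heqc]; exact ⟨a, rfl⟩
          refine ⟨((padicValInt 2 (d^2-1) : ℤ) / 2, 1 - (padicValInt 2 (d^2-1) : ℤ) / 2),
            mem_ds_two_odd₃ h2d h2D hpar, ?_, ?_⟩
          · refine show (ℓ:ℤ) ∣ a - (padicValInt 2 (d^2-1) : ℤ) / 2 from ?_
            have e : a - (padicValInt 2 (d^2-1) : ℤ) / 2 = 0 := by
              rw [hμ, ← heqc]; omega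
            rw [e]
            exact dvd_zero _
          · refine show (ℓ:ℤ) ∣ b - (1 - (padicValInt 2 (d^2-1) : ℤ) / 2) from ?_
            have e : (padicValInt 2 (d^2-1) : ℤ) / 2 = a := by rw [hμ, ← heqc]; omega
            rw [e]
            exact ⟨w, by linarith⟩
        · have hvs : padicValRat 2 ((A:ℚ)^2 + ((d^2-1 : ℤ):ℚ)) = m := by
            rw [show (A:ℚ)^2 + ((d^2-1 : ℤ):ℚ) = ((d^2-1 : ℤ):ℚ) + (A:ℚ)^2 by ring,
              padicValRat.add_eq_of_lt (by rwa [add_comm]) hDq (pow_ne_zero _ hAq)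
                (by rw [vA2]; exact hgt)]
          rw [hvs] at R2
          refine ⟨(3 - (padicValInt 2 (d^2-1) : ℤ), (padicValInt 2 (d^2-1) : ℤ) - 2),
            mem_ds_two_odd₂ h2d h2D, ?_, ?_⟩
          · refine show (ℓ:ℤ) ∣ a - (3 - (padicValInt 2 (d^2-1) : ℤ)) from ?_
            rw [hμ]
            exact ⟨w, by linarith⟩
          · refine show (ℓ:ℤ) ∣ b - ((padicValInt 2 (d^2-1) : ℤ) - 2) from ?_
            rw [hμ]
            exact ⟨0, by linarith⟩
    · -- q odd
      rw [if_neg hq2] at R1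
      by_cases hqd : (q:ℤ) ∣ d
      · have hnD : ¬ (q:ℤ) ∣ (d^2 - 1) := by
          intro hdvd
          have h1 : (q:ℤ) ∣ d^2 := by rw [sq]; exact hqd.mul_right d
          have h2 : (q:ℤ) ∣ d^2 - (d^2 - 1) := dvd_sub h1 hdvd
          norm_num at h2
          have h3 := Int.le_of_dvd one_pos h2
          have h4 := hq.two_le
          omega
        rcases hminab hnD hq2 with haz | hbz
        · refine ⟨(0, -n), mem_ds_odd_dvd₂ hq2 hqd hd0, by simp [haz], ?_⟩
          exact show (ℓ:ℤ) ∣ b - -n from ⟨w, by linarith⟩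
        · refine ⟨(-n, 0), mem_ds_odd_dvd₁ hq2 hqd hd0, ?_, by simp [hbz]⟩
          exact show (ℓ:ℤ) ∣ a - -n from ⟨w, by linarith⟩
      · have hqD : (q:ℤ) ∣ d^2 - 1 := by
          rcases (Int.Prime.dvd_mul' hq hcase1) with h | h
          · exact absurd h hqd
          · exact h
        have hnz : n = 0 := by rw [hn_def, padicValInt.eq_zero_of_not_dvd hqd]; rfl
        have hm1 : 1 ≤ m := pvr_one_le_of_dvd hD0 hqD
        rw [if_neg hq2] at R2
        rw [hnz] at R1
        by_cases haz : a = 0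
        · refine ⟨(0, 0), mem_ds_odd_D₁ hq2 hqd hqD, by simp [haz], ?_⟩
          exact show (ℓ:ℤ) ∣ b - 0 from ⟨w, by linarith⟩
        · have ha1 : 1 ≤ a := by omega
          rcases lt_trichotomy (2 * a) m with hlt | heqc | hgt
          · have hvs : padicValRat q ((A:ℚ)^2 + ((d^2-1 : ℤ):ℚ)) = 2 * a := by
              rw [padicValRat.add_eq_of_lt hsum (pow_ne_zero _ hAq) hDq (by rw [vA2]; exact hlt),
                vA2]
            rw [hvs] at R2
            have hdvd3 : (ℓ:ℤ) ∣ 3 * a := ⟨w, by linarith⟩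
            have hla : (ℓ:ℤ) ∣ a := by
              rcases (Int.Prime.dvd_mul' hℓ hdvd3) with h | h
              · exfalso
                have h1 := Int.le_of_dvd (by norm_num) h
                have h2 : (5:ℤ) ≤ ℓ := by exact_mod_cast h5
                omega
              · exact h
            refine ⟨(0, 0), mem_ds_odd_D₁ hq2 hqd hqD, by simpa using hla, ?_⟩
            refine show (ℓ:ℤ) ∣ b - 0 from ?_
            have e : b - 0 = 2 * a := by linarith
            rw [e]
            exact Dvd.dvd.mul_left hla 2
          · have hpar : (2:ℤ) ∣ (padicValInt q (d^2-1) : ℤ) := by rw [hμ, ← heqc]; exact ⟨a, rfl⟩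
            refine ⟨((padicValInt q (d^2-1) : ℤ) / 2, -(padicValInt q (d^2-1) : ℤ) / 2),
              mem_ds_odd_D₃ hq2 hqd hqD hpar, ?_, ?_⟩
            · refine show (ℓ:ℤ) ∣ a - (padicValInt q (d^2-1) : ℤ) / 2 from ?_
              have e : a - (padicValInt q (d^2-1) : ℤ) / 2 = 0 := by rw [hμ, ← heqc]; omega
              rw [e]
              exact dvd_zero _
            · refine show (ℓ:ℤ) ∣ b - (-(padicValInt q (d^2-1) : ℤ) / 2) from ?_
              have e : -(padicValInt q (d^2-1) : ℤ) / 2 = -a := by rw [hμ, ← heqc]; omega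
              rw [e]
              exact ⟨w, by linarith⟩
          · have hvs : padicValRat q ((A:ℚ)^2 + ((d^2-1 : ℤ):ℚ)) = m := by
              rw [show (A:ℚ)^2 + ((d^2-1 : ℤ):ℚ) = ((d^2-1 : ℤ):ℚ) + (A:ℚ)^2 by ring,
                padicValRat.add_eq_of_lt (by rwa [add_comm]) hDq (pow_ne_zero _ hAq)
                  (by rw [vA2]; exact hgt)]
            rw [hvs] at R2
            refine ⟨(-(padicValInt q (d^2-1) : ℤ), (padicValInt q (d^2-1) : ℤ)),
              mem_ds_odd_D₂ hq2 hqd hqD, ?_, ?_⟩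
            · refine show (ℓ:ℤ) ∣ a - (-(padicValInt q (d^2-1) : ℤ)) from ?_
              rw [hμ]
              exact ⟨w, by linarith⟩
            · refine show (ℓ:ℤ) ∣ b - (padicValInt q (d^2-1) : ℤ) from ?_
              rw [hμ]
              exact ⟨0, by linarith⟩
  · -- q does not divide d(d^2-1)
    have hq2 : q ≠ 2 := by
      intro h
      subst h
      apply hcase1
      obtain ⟨j, hj⟩ := Int.even_mul_succ_self (d - 1)
      exact ⟨j * (d + 1), by push_cast; linear_combination (d + 1) * hj⟩
    have hqd : ¬ (q:ℤ) ∣ d := fun h => hcase1 (h.mul_right _)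
    have hqD : ¬ (q:ℤ) ∣ (d^2 - 1) := fun h => hcase1 (h.mul_left _)
    have hnz : n = 0 := by rw [hn_def, padicValInt.eq_zero_of_not_dvd hqd]; rfl
    rw [if_neg hq2, hnz] at R1
    rcases hminab hqD hq2 with haz | hbz
    · refine ⟨(0, 0), mem_ds_notdvd hcase1, by simp [haz], ?_⟩
      exact show (ℓ:ℤ) ∣ b - 0 from ⟨w, by linarith⟩
    · refine ⟨(0, 0), mem_ds_notdvd hcase1, ?_, by simp [hbz]⟩
      exact show (ℓ:ℤ) ∣ a - 0 from ⟨w, by linarith⟩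

lemma descent_key0 (d : ℤ) (hd : 3 ≤ d) (B : ℤ) (hB : B ≠ 0)
    (h4 : 4 * B = d ^ 2 - 1) (q : ℕ) (hq : q.Prime) :
    ∃ t : ℤ × ℤ, t ∈ descentSet d q ∧ padicValRat q (B:ℚ) = t.2 := by
  haveI : Fact q.Prime := ⟨hq⟩
  have hd0 : d ≠ 0 := by omega
  have hD0 : d ^ 2 - 1 ≠ 0 := by nlinarith
  have h2D : (2:ℤ) ∣ d^2 - 1 := by rw [← h4]; exact ⟨2*B, by ring⟩
  have h2d : ¬ (2:ℤ) ∣ d := by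
    intro h2d
    have h1 : (2:ℤ) ∣ d^2 := by rw [sq]; exact h2d.mul_right d
    have h2 : (2:ℤ) ∣ d^2 - (d^2 - 1) := dvd_sub h1 h2D
    norm_num at h2
  by_cases hcase1 : (q:ℤ) ∣ d * (d^2 - 1)
  · by_cases hq2 : q = 2
    · subst hq2
      have h8 : (2:ℤ)^3 ∣ d^2 - 1 := by
        obtain ⟨k, hk⟩ : ∃ k, d = 2 * k + 1 := ⟨d / 2, by omega⟩
        obtain ⟨j, hj⟩ := Int.even_mul_succ_self k
        exact ⟨j, by rw [hk]; linear_combination 4 * hj⟩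
      have hm3 : (3:ℤ) ≤ padicValRat 2 ((d^2-1 : ℤ):ℚ) := pvr_le_of_pow_dvd hD0 h8
      have hval : padicValRat 2 ((d^2-1 : ℤ):ℚ) = 2 + padicValRat 2 ((B:ℤ):ℚ) := by
        have hc : ((d^2-1 : ℤ):ℚ) = 4 * (B:ℚ) := by
          have := congrArg (fun z : ℤ => (z:ℚ)) h4
          push_cast at this
          push_cast
          linarith
        have hself : padicValRat 2 (2:ℚ) = 1 := by
          simpa using padicValRat.self (p := 2) one_lt_two
        rw [hc, padicValRat.mul (by norm_num) (Int.cast_ne_zero.2 hB),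
          show (4:ℚ) = 2^2 by norm_num, padicValRat.pow (2:ℚ), hself]
        push_cast; ring
      refine ⟨(3 - (padicValInt 2 (d^2-1) : ℤ), (padicValInt 2 (d^2-1) : ℤ) - 2),
        mem_ds_two_odd₂ h2d h2D, ?_⟩
      have hμ : (padicValInt 2 (d^2-1) : ℤ) = padicValRat 2 ((d^2-1 : ℤ):ℚ) :=
        padicValRat.of_int.symm
      refine show padicValRat 2 ((B:ℤ):ℚ) = (padicValInt 2 (d^2-1) : ℤ) - 2 from ?_
      rw [hμ]
      linarith
    · by_cases hqd : (q:ℤ) ∣ d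
      · have hnD : ¬ (q:ℤ) ∣ (d^2 - 1) := by
          intro hdvd
          have h1 : (q:ℤ) ∣ d^2 := by rw [sq]; exact hqd.mul_right d
          have h2 : (q:ℤ) ∣ d^2 - (d^2 - 1) := dvd_sub h1 hdvd
          norm_num at h2
          have h3 := Int.le_of_dvd one_pos h2
          have h4 := hq.two_le
          omega
        have hnB : ¬ (q:ℤ) ∣ B := by
          intro hdvd
          exact hnD (by rw [← h4]; exact hdvd.mul_left 4)
        exact ⟨(-(padicValInt q d : ℤ), 0), mem_ds_odd_dvd₁ hq2 hqd hd0,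
          pvr_eq_zero_of_not_dvd hnB⟩
      · have hqD : (q:ℤ) ∣ d^2 - 1 := by
          rcases Int.Prime.dvd_mul' hq hcase1 with h | h
          · exact absurd h hqd
          · exact h
        refine ⟨(-(padicValInt q (d^2-1) : ℤ), (padicValInt q (d^2-1) : ℤ)),
          mem_ds_odd_D₂ hq2 hqd hqD, ?_⟩
        have hμ : (padicValInt q (d^2-1) : ℤ) = padicValRat q ((d^2-1 : ℤ):ℚ) :=
          padicValRat.of_int.symm
        have hc2 : padicValRat q (2:ℚ) = 0 := by
          have hnd : ¬ (q:ℤ) ∣ (2:ℤ) := by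
            intro hdvd
            have : q ∣ 2 := by exact_mod_cast hdvd
            exact hq2 ((Nat.prime_dvd_prime_iff_eq hq Nat.prime_two).1 this)
          have := pvr_eq_zero_of_not_dvd hnd
          simpa using this
        have hval : padicValRat q ((d^2-1 : ℤ):ℚ) = padicValRat q ((B:ℤ):ℚ) := by
          have hc : ((d^2-1 : ℤ):ℚ) = 4 * (B:ℚ) := by
            have := congrArg (fun z : ℤ => (z:ℚ)) h4
            push_cast at this
            push_cast
            linarith
          rw [hc, padicValRat.mul (by norm_num) (Int.cast_ne_zero.2 hB),
            show (4:ℚ) = 2^2 by norm_num, padicValRat.pow (2:ℚ), hc2]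
          push_cast; ring
        refine show padicValRat q ((B:ℤ):ℚ) = (padicValInt q (d^2-1) : ℤ) from ?_
        rw [hμ, hval]
  · refine ⟨(0, 0), mem_ds_notdvd hcase1, ?_⟩
    have hqD : ¬ (q:ℤ) ∣ (d^2 - 1) := fun h => hcase1 (h.mul_left _)
    have hnB : ¬ (q:ℤ) ∣ B := by
      intro hdvd
      exact hqD (by rw [← h4]; exact hdvd.mul_left 4)
    exact pvr_eq_zero_of_not_dvd hnB

/-- Descent for exponents `ℓ ≥ 5`: if `d ≥ 3`, `ℓ ≥ 5` is prime and the integers `x`, `y`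
satisfy `d(2x+d+1)(x² + (d+1)x + d(d+1)/2) = 2yˡ`, then there are positive rationals
`α`, `β` with `(ord_q(α), ord_q(β)) ∈ T_q` for every prime `q`, and rationals `y₁`, `y₂`,
such that `2x+d+1 = α y₁ˡ` and `x² + (d+1)x + d(d+1)/2 = β y₂ˡ`. -/
theorem descent_ell_ge_five (d : ℤ) (hd : 3 ≤ d) (ℓ : ℕ) (hℓ : ℓ.Prime) (h5 : 5 ≤ ℓ)
    (x y : ℤ)
    (h : d * (2 * x + d + 1) * (x ^ 2 + (d + 1) * x + d * (d + 1) / 2) = 2 * y ^ ℓ) :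
    ∃ α β : ℚ, 0 < α ∧ 0 < β ∧
      (∀ q : ℕ, q.Prime → (padicValRat q α, padicValRat q β) ∈ descentSet d q) ∧
      ∃ y₁ y₂ : ℚ,
        ((2 * x + d + 1 : ℤ) : ℚ) = α * y₁ ^ ℓ ∧
        ((x ^ 2 + (d + 1) * x + d * (d + 1) / 2 : ℤ) : ℚ) = β * y₂ ^ ℓ := by
  have hodd : Odd ℓ := hℓ.odd_of_ne_two (by omega)
  have hl0 : ℓ ≠ 0 := by omega
  obtain ⟨j, hj⟩ := Int.even_mul_succ_self d
  have hc : 2 * (d * (d + 1) / 2) = d * (d + 1) :=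
    Int.mul_ediv_cancel' ⟨j, by omega⟩
  set A := 2 * x + d + 1 with hA_def
  set B := x ^ 2 + (d + 1) * x + d * (d + 1) / 2 with hB_def
  have h4 : 4 * B = A ^ 2 + (d ^ 2 - 1) := by
    rw [hB_def, hA_def]
    linear_combination 2 * hc
  have hBpos : 0 < B := by nlinarith [sq_nonneg A]
  have hB0 : B ≠ 0 := hBpos.ne'
  have hd0 : d ≠ 0 := by omega
  have hD0 : d ^ 2 - 1 ≠ 0 := by nlinarith
  have hN0 : d * (d ^ 2 - 1) ≠ 0 := mul_ne_zero hd0 hD0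
  by_cases hA0 : A = 0
  · -- degenerate case
    have h4' : 4 * B = d ^ 2 - 1 := by rw [h4, hA0]; ring
    have key := fun q (hq : q.Prime) => descent_key0 d hd B hB0 h4' q hq
    set T : ℕ → ℤ × ℤ := fun q => if hq : q.Prime then (key q hq).choose else (0, 0) with hT_def
    have hTmem : ∀ q : ℕ, q.Prime → T q ∈ descentSet d q := by
      intro q hq
      simp only [hT_def, dif_pos hq]
      exact (key q hq).choose_spec.1
    have hTval : ∀ q : ℕ, q.Prime → padicValRat q (B:ℚ) = (T q).2 := by
      intro q hq
      simp only [hT_def, dif_pos hq]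
      exact (key q hq).choose_spec.2
    obtain ⟨α, hα, hαval⟩ := construct0 (fun q => (T q).1) (d * (d ^ 2 - 1)) hN0
      (fun q hq hnd => by
        show (T q).1 = 0
        rw [ds_forced hnd (hTmem q hq)])
    obtain ⟨β, hβ, hβval, y₂, hy₂⟩ := construct hodd hl0 B (d * (d ^ 2 - 1) * B) hB0
      (mul_ne_zero hN0 hB0) (fun q => (T q).2)
      (by
        intro q hq hnd
        have h1 : ¬ (q:ℤ) ∣ d * (d ^ 2 - 1) := fun hh => hnd (hh.mul_right _)
        have h2 : ¬ (q:ℤ) ∣ B := fun hh => hnd (hh.mul_left _)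
        refine ⟨?_, pvr_eq_zero_of_not_dvd h2⟩
        show (T q).2 = 0
        rw [ds_forced h1 (hTmem q hq)])
      (by
        intro q hq
        show (ℓ:ℤ) ∣ padicValRat q (B:ℚ) - (T q).2
        rw [hTval q hq]
        simp)
    refine ⟨α, β, hα, hβ, ?_, 0, y₂, ?_, hy₂⟩
    · intro q hq
      rw [hαval q hq, hβval q hq]
      exact hTmem q hq
    · rw [hA0]
      rw [zero_pow hl0, mul_zero]
      norm_num
  · -- main case
    have hy0 : y ≠ 0 := by
      intro hy
      rw [hy, zero_pow hl0, mul_zero] at h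
      exact mul_ne_zero (mul_ne_zero hd0 hA0) hB0 h
    have key := fun q (hq : q.Prime) =>
      descent_key d hd hℓ h5 A B y hA0 hB0 hy0 h4 h q hq
    set T : ℕ → ℤ × ℤ := fun q => if hq : q.Prime then (key q hq).choose else (0, 0) with hT_def
    have hTmem : ∀ q : ℕ, q.Prime → T q ∈ descentSet d q := by
      intro q hq
      simp only [hT_def, dif_pos hq]
      exact (key q hq).choose_spec.1
    have hTa : ∀ q : ℕ, q.Prime → (ℓ:ℤ) ∣ padicValRat q (A:ℚ) - (T q).1 := by
      intro q hq
      simp only [hT_def, dif_pos hq]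
      exact (key q hq).choose_spec.2.1
    have hTb : ∀ q : ℕ, q.Prime → (ℓ:ℤ) ∣ padicValRat q (B:ℚ) - (T q).2 := by
      intro q hq
      simp only [hT_def, dif_pos hq]
      exact (key q hq).choose_spec.2.2
    have hNN0 : d * (d ^ 2 - 1) * A * B ≠ 0 :=
      mul_ne_zero (mul_ne_zero hN0 hA0) hB0
    obtain ⟨α, hα, hαval, y₁, hy₁⟩ := construct hodd hl0 A (d * (d ^ 2 - 1) * A * B) hA0
      hNN0 (fun q => (T q).1)
      (by
        intro q hq hnd
        have h1 : ¬ (q:ℤ) ∣ d * (d ^ 2 - 1) := fun hh => hnd ((hh.mul_right _).mul_right _)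
        have h2 : ¬ (q:ℤ) ∣ A := fun hh => hnd ((hh.mul_left _).mul_right _)
        refine ⟨?_, pvr_eq_zero_of_not_dvd h2⟩
        show (T q).1 = 0
        rw [ds_forced h1 (hTmem q hq)])
      hTa
    obtain ⟨β, hβ, hβval, y₂, hy₂⟩ := construct hodd hl0 B (d * (d ^ 2 - 1) * A * B) hB0
      hNN0 (fun q => (T q).2)
      (by
        intro q hq hnd
        have h1 : ¬ (q:ℤ) ∣ d * (d ^ 2 - 1) := fun hh => hnd ((hh.mul_right _).mul_right _)
        have h2 : ¬ (q:ℤ) ∣ B := fun hh => hnd (hh.mul_left _)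
        refine ⟨?_, pvr_eq_zero_of_not_dvd h2⟩
        show (T q).2 = 0
        rw [ds_forced h1 (hTmem q hq)])
      hTb
    refine ⟨α, β, hα, hβ, ?_, y₁, y₂, hy₁, hy₂⟩
    intro q hq
    rw [hαval q hq, hβval q hq]
    exact hTmem q hq
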